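/- Let Λ be a commutative monoid and λ ∈ Λ. Let fSets_λ be the category of pairs (J, λ̲ : J → Λ) with J a finite nonempty set and Σ_j λ̲(j) = λ, with morphisms the surjections compatible with fiberwise-sum pushforward of λ̲; and let cTw(fSets)_λ be the category of triples (λ̲, J ↠ K) with Σ_j λ̲(j) = λ and morphisms as in the twisted arrow category of fSets compatible with pushforward. Then the functor h^u : cTw(fSets)_λ → (fSets_λ)^op sending (λ̲, J →^φ K) to (K, φ_*λ̲) is cofinal; specifically, for every object ξ = (K', μ̲) ∈ fSets_λ, the comma category cTw(fSets)_λ ×_{(fSets_λ)^op} ((fSets_λ)^op)_{ξ/} is equivalent to the product ∏_{k ∈ K'} cTw(fSets)^{μ̲(k)}, and each category cTw(fSets)^{μ} (for μ ∈ Λ) is connected. -/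

import Mathlib

open CategoryTheory Function Limits

theorem push_fiber {Λ : Type} [AddCommMonoid Λ] {J₁ J₂ : Type} [Finite J₁] [Finite J₂]
    (φ : J₁ → J₂) (w₁ : J₁ → Λ) (w₂ : J₂ → Λ)
    (hw : ∀ b, ∑ᶠ a ∈ φ ⁻¹' {b}, w₁ a = w₂ b) (S : Set J₂) :
    ∑ᶠ a ∈ φ ⁻¹' S, w₁ a = ∑ᶠ b ∈ S, w₂ b := by
  rw [← Set.biUnion_preimage_singleton φ S, finsum_mem_biUnion]
  · exact finsum_mem_congr rfl fun b _ => hw b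
  · intro b₁ _ b₂ _ hne
    refine Set.disjoint_left.mpr fun a ha₁ ha₂ => hne ?_
    have h₁ : φ a = b₁ := ha₁
    have h₂ : φ a = b₂ := ha₂
    rw [← h₁, h₂]
  · exact Set.toFinite _
  · exact fun b _ => Set.toFinite _

theorem push_comp {Λ : Type} [AddCommMonoid Λ] {J₁ J₂ J₃ : Type} [Finite J₁] [Finite J₂]
    (τ₁ : J₁ → J₂) (τ₂ : J₂ → J₃) (w : J₁ → Λ) (c : J₃) :
    ∑ᶠ a ∈ (τ₂ ∘ τ₁) ⁻¹' {c}, w a = ∑ᶠ b ∈ τ₂ ⁻¹' {c}, ∑ᶠ a ∈ τ₁ ⁻¹' {b}, w a := by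
  rw [Set.preimage_comp]
  exact push_fiber τ₁ w (fun b => ∑ᶠ a ∈ τ₁ ⁻¹' {b}, w a) (fun _ => rfl) _

theorem push_total {Λ : Type} [AddCommMonoid Λ] {J K : Type} [Finite J] [Finite K]
    (q : J → K) (w : J → Λ) :
    ∑ᶠ k, ∑ᶠ j ∈ q ⁻¹' {k}, w j = ∑ᶠ j, w j := by
  rw [← finsum_mem_univ (f := fun k => ∑ᶠ j ∈ q ⁻¹' {k}, w j), ← finsum_mem_univ (f := w),
    ← Set.preimage_univ (f := q)]
  exact (push_fiber q w _ (fun _ => rfl) Set.univ).symm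

/-- An object of `fSets^λ` (resp. `fSets_λ`): a finite nonempty set `J` with a weight
function `λ̲ : J → Λ` of total weight `λ`. -/
structure GrSet (Λ : Type) [AddCommMonoid Λ] (lam : Λ) : Type 1 where
  J : Type
  jFin : Finite J
  jNe : Nonempty J
  w : J → Λ
  hw : ∑ᶠ j, w j = lam

/-- A morphism in `fSets^λ`: a surjection compatible with fiberwise-sum pushforward of
the weights. -/
structure GrSetHom {Λ : Type} [AddCommMonoid Λ] {lam : Λ} (A B : GrSet Λ lam) : Type where
  τ : A.J → B.J
  hτ : Function.Surjective τ
  hw : ∀ b, ∑ᶠ a ∈ τ ⁻¹' {b}, A.w a = B.w b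

theorem GrSetHom.ext' {Λ : Type} [AddCommMonoid Λ] {lam : Λ} {A B : GrSet Λ lam} :
    ∀ {f g : GrSetHom A B}, f.τ = g.τ → f = g
  | ⟨_, _, _⟩, ⟨_, _, _⟩, rfl => rfl

instance grSetCategory (Λ : Type) [AddCommMonoid Λ] (lam : Λ) : Category (GrSet Λ lam) where
  Hom := GrSetHom
  id A := ⟨_root_.id, Function.surjective_id, fun b => by
    rw [show (_root_.id : A.J → A.J) ⁻¹' {b} = {b} from Set.preimage_id]
    exact finsum_mem_singleton⟩
  comp := fun {A B C} f g => ⟨g.τ ∘ f.τ, g.hτ.comp f.hτ, fun c => by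
    have := A.jFin; have := B.jFin
    rw [push_comp f.τ g.τ A.w c, finsum_mem_congr rfl fun b _ => f.hw b]
    exact g.hw c⟩
  id_comp := fun f => GrSetHom.ext' rfl
  comp_id := fun f => GrSetHom.ext' rfl
  assoc := fun f g h => GrSetHom.ext' rfl

/-- An object of `cTw(fSets)^λ` (resp. `cTw(fSets)_λ`): a surjection `J ↠ K` of finite
nonempty sets together with a weight function `λ̲ : J → Λ` of total weight `λ`. -/
structure GrTw (Λ : Type) [AddCommMonoid Λ] (lam : Λ) : Type 1 where
  J : Type
  K : Type
  jFin : Finite J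
  kFin : Finite K
  jNe : Nonempty J
  kNe : Nonempty K
  q : J → K
  hq : Function.Surjective q
  w : J → Λ
  hw : ∑ᶠ j, w j = lam

/-- A morphism in `cTw(fSets)^λ`: a twisted-arrow morphism `(φ : J₁ → J₂, ψ : K₂ → K₁)`
with `φ_* λ̲¹ = λ̲²`. -/
structure GrTwHom {Λ : Type} [AddCommMonoid Λ] {lam : Λ} (A B : GrTw Λ lam) : Type where
  φ : A.J → B.J
  ψ : B.K → A.K
  hφ : Function.Surjective φ
  hψ : Function.Surjective ψ
  hcomm : ∀ j, ψ (B.q (φ j)) = A.q j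
  hw : ∀ b, ∑ᶠ a ∈ φ ⁻¹' {b}, A.w a = B.w b

theorem GrTwHom.ext' {Λ : Type} [AddCommMonoid Λ] {lam : Λ} {A B : GrTw Λ lam} :
    ∀ {f g : GrTwHom A B}, f.φ = g.φ → f.ψ = g.ψ → f = g
  | ⟨_, _, _, _, _, _⟩, ⟨_, _, _, _, _, _⟩, rfl, rfl => rfl

instance grTwCategory (Λ : Type) [AddCommMonoid Λ] (lam : Λ) : Category (GrTw Λ lam) where
  Hom := GrTwHom
  id A := ⟨_root_.id, _root_.id, Function.surjective_id, Function.surjective_id,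
    fun _ => rfl, fun b => by
      rw [show (_root_.id : A.J → A.J) ⁻¹' {b} = {b} from Set.preimage_id]
      exact finsum_mem_singleton⟩
  comp := fun {A B C} f g => ⟨g.φ ∘ f.φ, f.ψ ∘ g.ψ, g.hφ.comp f.hφ, f.hψ.comp g.hψ,
    fun j => by simp only [Function.comp_apply, g.hcomm, f.hcomm],
    fun c => by
      have := A.jFin; have := B.jFin
      rw [push_comp f.φ g.φ A.w c, finsum_mem_congr rfl fun b _ => f.hw b]
      exact g.hw c⟩
  id_comp := fun f => GrTwHom.ext' rfl rfl
  comp_id := fun f => GrTwHom.ext' rfl rfl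
  assoc := fun f g h => GrTwHom.ext' rfl rfl

/-- The pushforward object `(K, φ_* λ̲)` of `(λ̲, J →^φ K)`. -/
noncomputable def huObj (Λ : Type) [AddCommMonoid Λ] (lam : Λ) (A : GrTw Λ lam) : GrSet Λ lam where
  J := A.K
  jFin := A.kFin
  jNe := A.kNe
  w := fun k => ∑ᶠ j ∈ A.q ⁻¹' {k}, A.w j
  hw := by
    have := A.jFin; have := A.kFin
    rw [push_total A.q A.w]
    exact A.hw

/-- The functor `h^u : cTw(fSets)_λ → (fSets_λ)^op` sending `(λ̲, J →^φ K)` to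
`(K, φ_* λ̲)`. -/
noncomputable def hu (Λ : Type) [AddCommMonoid Λ] (lam : Λ) : GrTw Λ lam ⥤ (GrSet Λ lam)ᵒᵖ where
  obj A := Opposite.op (huObj Λ lam A)
  map := fun {A B} f => Quiver.Hom.op
    (show huObj Λ lam B ⟶ huObj Λ lam A from
      ⟨f.ψ, f.hψ, fun k => by
        have := A.jFin; have := A.kFin; have := B.jFin; have := B.kFin
        have h1 : ∑ᶠ k₂ ∈ f.ψ ⁻¹' {k}, ∑ᶠ j₂ ∈ B.q ⁻¹' {k₂}, B.w j₂
            = ∑ᶠ j₂ ∈ (f.ψ ∘ B.q) ⁻¹' {k}, B.w j₂ := (push_comp B.q f.ψ B.w k).symm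
        have h2 : ∑ᶠ j₂ ∈ (f.ψ ∘ B.q) ⁻¹' {k}, B.w j₂
            = ∑ᶠ j₁ ∈ f.φ ⁻¹' ((f.ψ ∘ B.q) ⁻¹' {k}), A.w j₁ :=
          (push_fiber f.φ A.w B.w f.hw _).symm
        have h3 : f.φ ⁻¹' ((f.ψ ∘ B.q) ⁻¹' {k}) = A.q ⁻¹' {k} := by
          ext j₁
          simp only [Set.mem_preimage, Set.mem_singleton_iff, Function.comp_apply]
          rw [f.hcomm]
        show ∑ᶠ k₂ ∈ f.ψ ⁻¹' {k}, ∑ᶠ j₂ ∈ B.q ⁻¹' {k₂}, B.w j₂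
            = ∑ᶠ j₁ ∈ A.q ⁻¹' {k}, A.w j₁
        rw [h1, h2, h3]⟩)
  map_id _ := Quiver.Hom.unop_inj (GrSetHom.ext' rfl)
  map_comp _ _ := Quiver.Hom.unop_inj (GrSetHom.ext' rfl)

section Connected

variable {Λ : Type} [AddCommMonoid Λ]

/-- The point object of `cTw(fSets)^μ`. -/
def ptTw (mu : Λ) : GrTw Λ mu where
  J := PUnit
  K := PUnit
  jFin := inferInstance
  kFin := inferInstance
  jNe := ⟨⟨⟩⟩
  kNe := ⟨⟨⟩⟩
  q := _root_.id
  hq := Function.surjective_id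
  w := fun _ => mu
  hw := finsum_unique _

/-- The intermediate object `(J, PUnit)` used in the zigzag. -/
noncomputable def midTw {mu : Λ} (A : GrTw Λ mu) : GrTw Λ mu where
  J := A.J
  K := PUnit
  jFin := A.jFin
  kFin := inferInstance
  jNe := A.jNe
  kNe := ⟨⟨⟩⟩
  q := fun _ => ⟨⟩
  hq := fun p => ⟨Classical.choice A.jNe, Subsingleton.elim (α := PUnit) _ _⟩
  w := A.w
  hw := A.hw

noncomputable def midToA {mu : Λ} (A : GrTw Λ mu) : midTw A ⟶ A where
  φ := _root_.id
  ψ := fun _ => ⟨⟩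
  hφ := Function.surjective_id
  hψ := fun p => ⟨Classical.choice A.kNe, Subsingleton.elim (α := PUnit) _ _⟩
  hcomm := fun j => Subsingleton.elim (α := PUnit) _ _
  hw := fun b => by
    show ∑ᶠ a ∈ (_root_.id : A.J → A.J) ⁻¹' {b}, A.w a = A.w b
    rw [show (_root_.id : A.J → A.J) ⁻¹' {b} = {b} from Set.preimage_id]
    exact finsum_mem_singleton

noncomputable def midToPt {mu : Λ} (A : GrTw Λ mu) : midTw A ⟶ ptTw mu where
  φ := fun _ => ⟨⟩
  ψ := _root_.id
  hφ := fun p => ⟨Classical.choice A.jNe, Subsingleton.elim (α := PUnit) _ _⟩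
  hψ := Function.surjective_id
  hcomm := fun j => Subsingleton.elim (α := PUnit) _ _
  hw := fun b => by
    have := A.jFin
    have h : (fun (_ : A.J) => PUnit.unit) ⁻¹' {b} = Set.univ :=
      Set.eq_univ_of_forall fun a => Subsingleton.elim (α := PUnit) _ _
    show ∑ᶠ a ∈ (fun (_ : A.J) => PUnit.unit) ⁻¹' {b}, A.w a = mu
    rw [h, finsum_mem_univ]
    exact A.hw

theorem grTw_connected (mu : Λ) : IsConnected (GrTw Λ mu) := by
  haveI : Nonempty (GrTw Λ mu) := ⟨ptTw mu⟩
  apply zigzag_isConnected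
  intro A B
  have h1 : Zag A (midTw A) := Or.inr ⟨midToA A⟩
  have h2 : Zag (midTw A) (ptTw mu) := Or.inl ⟨midToPt A⟩
  have h3 : Zag (ptTw mu) (midTw B) := Or.inr ⟨midToPt B⟩
  have h4 : Zag (midTw B) B := Or.inl ⟨midToA B⟩
  exact Relation.ReflTransGen.tail
    (Relation.ReflTransGen.tail (Relation.ReflTransGen.tail
      (Relation.ReflTransGen.single h1) h2) h3) h4

theorem pi_grTw_connected {K : Type} (w : K → Λ) :
    IsConnected (∀ k, GrTw Λ (w k)) := by
  haveI : Nonempty (∀ k, GrTw Λ (w k)) := ⟨fun k => ptTw (w k)⟩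
  apply zigzag_isConnected
  intro A B
  have h1 : Zag A (fun k => midTw (A k)) := Or.inr ⟨fun k => midToA (A k)⟩
  have h2 : Zag (fun k => midTw (A k)) (fun k => ptTw (w k)) :=
    Or.inl ⟨fun k => midToPt (A k)⟩
  have h3 : Zag (fun k => ptTw (w k)) (fun k => midTw (B k)) :=
    Or.inr ⟨fun k => midToPt (B k)⟩
  have h4 : Zag (fun k => midTw (B k)) B := Or.inl ⟨fun k => midToA (B k)⟩
  exact Relation.ReflTransGen.tail
    (Relation.ReflTransGen.tail (Relation.ReflTransGen.tail
      (Relation.ReflTransGen.single h1) h2) h3) h4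

end Connected
section Fiber

variable {Λ : Type} [AddCommMonoid Λ] {lam : Λ} (ξ : GrSet Λ lam)

/-- Generic lemma: a finsum over a fiber of a restricted map equals the finsum over the
fiber of the unrestricted map, provided the unrestricted fiber lies in the subtype. -/
theorem finsum_fiber_subtype {α β M : Type} [AddCommMonoid M] (w : α → M)
    (s : Set α) (F : s → β) (G : α → β) (hFG : ∀ a : s, F a = G a.val) (b : β)
    (hsub : G ⁻¹' {b} ⊆ s) :
    ∑ᶠ a ∈ F ⁻¹' {b}, w a.val = ∑ᶠ a ∈ G ⁻¹' {b}, w a := by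
  have himg : Subtype.val '' (F ⁻¹' {b}) = G ⁻¹' {b} := by
    ext a
    constructor
    · rintro ⟨a', ha', rfl⟩
      have : F a' = b := ha'
      rw [hFG] at this
      exact this
    · intro ha
      have hb : G a = b := ha
      exact ⟨⟨a, hsub ha⟩, show F _ = b by rw [hFG]; exact hb, rfl⟩
  calc ∑ᶠ a ∈ F ⁻¹' {b}, w a.val
      = ∑ᶠ a ∈ Subtype.val '' (F ⁻¹' {b}), w a :=
        (finsum_mem_image (Subtype.val_injective.injOn)).symm
    _ = ∑ᶠ a ∈ G ⁻¹' {b}, w a := by rw [himg]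

/-- The fiber of `(X, t)` over `k ∈ ξ`. -/
def fiberTw (X : GrTw Λ lam) (t : huObj Λ lam X ⟶ ξ) (k : ξ.J) : GrTw Λ (ξ.w k) where
  J := (t.τ ∘ X.q) ⁻¹' {k}
  K := t.τ ⁻¹' {k}
  jFin := @Subtype.finite _ X.jFin _
  kFin := @Subtype.finite _ X.kFin _
  jNe := by
    obtain ⟨c, hc⟩ := t.hτ k
    obtain ⟨j, hj⟩ := X.hq c
    exact ⟨⟨j, show t.τ (X.q j) = k by rw [hj]; exact hc⟩⟩
  kNe := by
    obtain ⟨c, hc⟩ := t.hτ k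
    exact ⟨⟨c, hc⟩⟩
  q := fun j => ⟨X.q j.val, j.prop⟩
  hq := by
    rintro ⟨c, hc⟩
    obtain ⟨j, hj⟩ := X.hq c
    exact ⟨⟨j, show t.τ (X.q j) = k by rw [hj]; exact hc⟩, Subtype.ext hj⟩
  w := fun j => X.w j.val
  hw := by
    have := X.jFin
    have := X.kFin
    rw [finsum_set_coe_eq_finsum_mem]
    exact (push_comp X.q t.τ X.w k).trans (t.hw k)

/-- The morphism between fibers induced by a twisted-arrow morphism over `ξ`. -/
def fiberHom {X Y : GrTw Λ lam} (t : huObj Λ lam X ⟶ ξ) (s : huObj Λ lam Y ⟶ ξ)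
    (g : GrTwHom X Y) (tri : ∀ c, t.τ (g.ψ c) = s.τ c) (k : ξ.J) :
    GrTwHom (fiberTw ξ X t k) (fiberTw ξ Y s k) :=
  have chain : ∀ j, s.τ (Y.q (g.φ j)) = t.τ (X.q j) := fun j => by
    rw [← tri (Y.q (g.φ j)), g.hcomm]
  { φ := fun j => ⟨g.φ j.val, show s.τ (Y.q (g.φ j.val)) = k by
      rw [chain]; exact j.prop⟩
    ψ := fun c => ⟨g.ψ c.val, show t.τ (g.ψ c.val) = k from (tri c.val).trans c.prop⟩
    hφ := by
      rintro ⟨b, hb⟩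
      obtain ⟨a, ha⟩ := g.hφ b
      refine ⟨⟨a, ?_⟩, Subtype.ext ha⟩
      show t.τ (X.q a) = k
      rw [← chain a, ha]
      exact hb
    hψ := by
      rintro ⟨c, hc⟩
      obtain ⟨c', hc'⟩ := g.hψ c
      refine ⟨⟨c', ?_⟩, Subtype.ext hc'⟩
      show s.τ c' = k
      rw [← tri c', hc']
      exact hc
    hcomm := fun j => Subtype.ext (g.hcomm j.val)
    hw := by
      rintro ⟨b, hb⟩
      have := X.jFin
      have hsub : g.φ ⁻¹' {b} ⊆ (t.τ ∘ X.q) ⁻¹' {k} := by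
        intro a (ha : g.φ a = b)
        show t.τ (X.q a) = k
        rw [← chain a, ha]
        exact hb
      have hpre : ((fun j : ((t.τ ∘ X.q) ⁻¹' {k} : Set X.J) =>
          (⟨g.φ j.val, show s.τ (Y.q (g.φ j.val)) = k by rw [chain]; exact j.prop⟩ :
            ((s.τ ∘ Y.q) ⁻¹' {k} : Set Y.J))) ⁻¹' {⟨b, hb⟩})
          = (fun j : ((t.τ ∘ X.q) ⁻¹' {k} : Set X.J) => g.φ j.val) ⁻¹' {b} := by
        ext a
        simp only [Set.mem_preimage, Set.mem_singleton_iff, Subtype.ext_iff]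
      show ∑ᶠ a ∈ ((fun j : ((t.τ ∘ X.q) ⁻¹' {k} : Set X.J) =>
          (⟨g.φ j.val, show s.τ (Y.q (g.φ j.val)) = k by rw [chain]; exact j.prop⟩ :
            ((s.τ ∘ Y.q) ⁻¹' {k} : Set Y.J))) ⁻¹'
          {(⟨b, hb⟩ : ((s.τ ∘ Y.q) ⁻¹' {k} : Set Y.J))}), X.w a.val = Y.w b
      rw [hpre, finsum_fiber_subtype X.w ((t.τ ∘ X.q) ⁻¹' {k})
        (fun j => g.φ j.val) g.φ (fun _ => rfl) b hsub]
      exact g.hw b }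

end Fiber
section TheFunctor

variable {Λ : Type} [AddCommMonoid Λ] {lam : Λ} (ξ : GrSet Λ lam)

theorem tri_of_w {X Y : StructuredArrow (Opposite.op ξ) (hu Λ lam)} (g : X ⟶ Y) :
    ∀ c, X.hom.unop.τ (g.right.ψ c) = Y.hom.unop.τ c := by
  have hw := StructuredArrow.w g
  have h : ((hu Λ lam).map g.right).unop ≫ X.hom.unop = Y.hom.unop := by
    rw [← hw]; rfl
  intro c
  exact congrFun (congrArg GrSetHom.τ h) c

/-- The comparison functor sending `(X, t)` to the family of its fibers over `ξ`. -/
noncomputable def Ffun : StructuredArrow (Opposite.op ξ) (hu Λ lam) ⥤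
    ∀ k : ξ.J, GrTw Λ (ξ.w k) where
  obj X := fun k => fiberTw ξ X.right X.hom.unop k
  map {X Y} g := fun k => fiberHom ξ X.hom.unop Y.hom.unop g.right (tri_of_w ξ g) k
  map_id X := by
    funext k
    exact GrTwHom.ext' rfl rfl
  map_comp {X Y Z} g h := by
    funext k
    exact GrTwHom.ext' rfl rfl

end TheFunctor
section FullFaithful

variable {Λ : Type} [AddCommMonoid Λ] {lam : Λ} (ξ : GrSet Λ lam)

theorem Ffun_faithful : (Ffun ξ).Faithful := by
  constructor
  intro X Y g h hgh
  apply StructuredArrow.hom_ext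
  apply GrTwHom.ext'
  · funext j
    have h1 := congrFun hgh (X.hom.unop.τ (X.right.q j))
    have h2 := congrArg GrTwHom.φ h1
    have h3 := congrFun h2 ⟨j, rfl⟩
    exact congrArg Subtype.val h3
  · funext c
    have h1 := congrFun hgh (Y.hom.unop.τ c)
    have h2 := congrArg GrTwHom.ψ h1
    have h3 := congrFun h2 ⟨c, rfl⟩
    exact congrArg Subtype.val h3

section Glue

variable {X Y : StructuredArrow (Opposite.op ξ) (hu Λ lam)}
  (m : ∀ k, (Ffun ξ).obj X k ⟶ (Ffun ξ).obj Y k)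

/-- Glued map on index sets. -/
noncomputable def glueφ : X.right.J → Y.right.J :=
  fun j => ((m (X.hom.unop.τ (X.right.q j))).φ ⟨j, rfl⟩).val

/-- Glued map on target sets. -/
noncomputable def glueψ : Y.right.K → X.right.K :=
  fun c => ((m (Y.hom.unop.τ c)).ψ ⟨c, rfl⟩).val

theorem glueφ_spec (j : X.right.J) (k : ξ.J) (h : X.hom.unop.τ (X.right.q j) = k) :
    glueφ ξ m j = ((m k).φ ⟨j, h⟩).val := by
  subst h; rfl

theorem glueψ_spec (c : Y.right.K) (k : ξ.J) (h : Y.hom.unop.τ c = k) :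
    glueψ ξ m c = ((m k).ψ ⟨c, h⟩).val := by
  subst h; rfl

theorem glueφ_mem (j : X.right.J) :
    Y.hom.unop.τ (Y.right.q (glueφ ξ m j)) = X.hom.unop.τ (X.right.q j) :=
  ((m (X.hom.unop.τ (X.right.q j))).φ ⟨j, rfl⟩).prop

theorem glueψ_mem (c : Y.right.K) :
    X.hom.unop.τ (glueψ ξ m c) = Y.hom.unop.τ c :=
  ((m (Y.hom.unop.τ c)).ψ ⟨c, rfl⟩).prop

/-- The glued morphism in `cTw(fSets)_λ`. -/
noncomputable def glueHom : GrTwHom X.right Y.right where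
  φ := glueφ ξ m
  ψ := glueψ ξ m
  hφ := by
    intro b
    obtain ⟨a, ha⟩ := (m (Y.hom.unop.τ (Y.right.q b))).hφ ⟨b, rfl⟩
    refine ⟨a.val, ?_⟩
    rw [glueφ_spec ξ m a.val (Y.hom.unop.τ (Y.right.q b)) a.prop]
    exact congrArg Subtype.val ha
  hψ := by
    intro c
    obtain ⟨c', hc'⟩ := (m (X.hom.unop.τ c)).hψ ⟨c, rfl⟩
    refine ⟨c'.val, ?_⟩
    rw [glueψ_spec ξ m c'.val (X.hom.unop.τ c) c'.prop]
    exact congrArg Subtype.val hc'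
  hcomm := by
    intro j
    rw [glueψ_spec ξ m (Y.right.q (glueφ ξ m j)) (X.hom.unop.τ (X.right.q j))
      (glueφ_mem ξ m j)]
    exact congrArg Subtype.val
      ((m (X.hom.unop.τ (X.right.q j))).hcomm ⟨j, rfl⟩)
  hw := by
    intro b
    have := X.right.jFin
    set k := Y.hom.unop.τ (Y.right.q b) with hk
    have hsub : glueφ ξ m ⁻¹' {b} ⊆ (X.hom.unop.τ ∘ X.right.q) ⁻¹' {k} := by
      intro a (ha : glueφ ξ m a = b)
      show X.hom.unop.τ (X.right.q a) = k
      rw [← glueφ_mem ξ m a, ha]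
    have key := finsum_fiber_subtype X.right.w ((X.hom.unop.τ ∘ X.right.q) ⁻¹' {k})
      (fun a => ((m k).φ a).val) (glueφ ξ m)
      (fun a => (glueφ_spec ξ m a.val k a.prop).symm) b hsub
    rw [← key]
    have hpre : ((fun a : ((X.hom.unop.τ ∘ X.right.q) ⁻¹' {k} : Set X.right.J) =>
        ((m k).φ a).val) ⁻¹' {b}) = (m k).φ ⁻¹' {⟨b, rfl⟩} := by
      ext a
      simp only [Set.mem_preimage, Set.mem_singleton_iff]
      exact ⟨fun h => Subtype.ext h, fun h => congrArg Subtype.val h⟩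
    rw [hpre]
    exact (m k).hw ⟨b, rfl⟩

theorem glue_w : X.hom ≫ (hu Λ lam).map (glueHom ξ m) = Y.hom := by
  apply Quiver.Hom.unop_inj
  exact GrSetHom.ext' (funext fun c => glueψ_mem ξ m c)

end Glue

theorem Ffun_full : (Ffun ξ).Full := by
  constructor
  intro X Y m
  refine ⟨StructuredArrow.homMk (glueHom ξ m) (glue_w ξ m), ?_⟩
  funext k
  apply GrTwHom.ext'
  · funext a
    apply Subtype.ext
    show glueφ ξ m a.val = ((m k).φ a).val
    rw [glueφ_spec ξ m a.val k a.prop]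
    rfl
  · funext c
    apply Subtype.ext
    show glueψ ξ m c.val = ((m k).ψ c).val
    rw [glueψ_spec ξ m c.val k c.prop]
    rfl

end FullFaithful
section EssSurj

variable {Λ : Type} [AddCommMonoid Λ] {lam : Λ} (ξ : GrSet Λ lam)
  (Xf : ∀ k : ξ.J, GrTw Λ (ξ.w k))

/-- The glued (sigma) object of a family of fibers. -/
noncomputable def sigmaTw : GrTw Λ lam where
  J := Σ k, (Xf k).J
  K := Σ k, (Xf k).K
  jFin := by
    have := ξ.jFin
    haveI : ∀ k, Finite ((Xf k).J) := fun k => (Xf k).jFin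
    infer_instance
  kFin := by
    have := ξ.jFin
    haveI : ∀ k, Finite ((Xf k).K) := fun k => (Xf k).kFin
    infer_instance
  jNe := ⟨⟨Classical.choice ξ.jNe, Classical.choice (Xf _).jNe⟩⟩
  kNe := ⟨⟨Classical.choice ξ.jNe, Classical.choice (Xf _).kNe⟩⟩
  q := fun p => ⟨p.1, (Xf p.1).q p.2⟩
  hq := by
    rintro ⟨k, c⟩
    obtain ⟨j, hj⟩ := (Xf k).hq c
    exact ⟨⟨k, j⟩, congrArg (fun x => (⟨k, x⟩ : Σ k, (Xf k).K)) hj⟩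
  w := fun p => (Xf p.1).w p.2
  hw := by
    have := ξ.jFin
    haveI : ∀ k, Finite ((Xf k).J) := fun k => (Xf k).jFin
    haveI : Finite (Σ k, (Xf k).J) := inferInstance
    rw [← push_total (Sigma.fst : (Σ k, (Xf k).J) → ξ.J) (fun p => (Xf p.1).w p.2)]
    have h : ∀ k : ξ.J, ∑ᶠ p ∈ (Sigma.fst : (Σ k, (Xf k).J) → ξ.J) ⁻¹' {k},
        (Xf p.1).w p.2 = ξ.w k := by
      intro k
      rw [← Set.range_sigmaMk k, finsum_mem_range sigma_mk_injective]
      exact (Xf k).hw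
    rw [finsum_congr h]
    exact ξ.hw

/-- The canonical projection arrow `huObj (sigmaTw) ⟶ ξ`. -/
noncomputable def sigmaArr : huObj Λ lam (sigmaTw ξ Xf) ⟶ ξ where
  τ := Sigma.fst
  hτ := fun k => ⟨⟨k, Classical.choice (Xf k).kNe⟩, rfl⟩
  hw := by
    intro k
    haveI : ∀ k, Finite ((Xf k).J) := fun k => (Xf k).jFin
    haveI : ∀ k, Finite ((Xf k).K) := fun k => (Xf k).kFin
    have := ξ.jFin
    haveI : Finite (sigmaTw ξ Xf).J := (sigmaTw ξ Xf).jFin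
    haveI : Finite (sigmaTw ξ Xf).K := (sigmaTw ξ Xf).kFin
    haveI : Finite (Σ k, (Xf k).J) := inferInstance
    haveI : Finite (Σ k, (Xf k).K) := inferInstance
    have hpc := push_comp (J₁ := Σ k, (Xf k).J) (J₂ := Σ k, (Xf k).K)
      (sigmaTw ξ Xf).q Sigma.fst (sigmaTw ξ Xf).w k
    show ∑ᶠ (c : Σ k, (Xf k).K) (_ : c ∈ (Sigma.fst : (Σ k, (Xf k).K) → ξ.J) ⁻¹' {k}),
        ∑ᶠ (p : Σ k, (Xf k).J) (_ : p ∈ (sigmaTw ξ Xf).q ⁻¹' {c}),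
          (sigmaTw ξ Xf).w p = ξ.w k
    refine hpc.symm.trans ?_
    rw [show ((Sigma.fst ∘ (sigmaTw ξ Xf).q : (Σ k, (Xf k).J) → ξ.J))
      = (Sigma.fst : (Σ k, (Xf k).J) → ξ.J) from rfl]
    rw [← Set.range_sigmaMk k]
    exact (finsum_mem_range (f := fun p : (Σ k, (Xf k).J) => (Xf p.1).w p.2)
      sigma_mk_injective).trans (Xf k).hw

/-- Forward comparison between the `k`-fiber of the glued object and `Xf k`. -/
noncomputable def sigFibHomφ (k : ξ.J) :
    (fiberTw ξ (sigmaTw ξ Xf) (sigmaArr ξ Xf) k).J → (Xf k).J :=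
  fun p => (show p.val.1 = k from p.prop) ▸ p.val.2

noncomputable def sigFibInvψ (k : ξ.J) :
    (fiberTw ξ (sigmaTw ξ Xf) (sigmaArr ξ Xf) k).K → (Xf k).K :=
  fun p => (show p.val.1 = k from p.prop) ▸ p.val.2

noncomputable def sigFibHom (k : ξ.J) :
    GrTwHom (fiberTw ξ (sigmaTw ξ Xf) (sigmaArr ξ Xf) k) (Xf k) where
  φ := sigFibHomφ ξ Xf k
  ψ := fun c => ⟨⟨k, c⟩, rfl⟩
  hφ := fun j => ⟨⟨⟨k, j⟩, rfl⟩, rfl⟩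
  hψ := by
    rintro ⟨⟨k', c⟩, h⟩
    obtain rfl : k' = k := h
    exact ⟨c, rfl⟩
  hcomm := by
    rintro ⟨⟨k', j⟩, h⟩
    obtain rfl : k' = k := h
    rfl
  hw := by
    intro b
    have hpre : sigFibHomφ ξ Xf k ⁻¹' {b} = {⟨⟨k, b⟩, rfl⟩} := by
      ext p
      obtain ⟨⟨k', j⟩, h⟩ := p
      obtain rfl : k' = k := h
      constructor
      · intro hj
        have hjb : j = b := hj
        subst hjb
        rfl
      · intro hj
        have hv := congrArg Subtype.val hj
        injection hv with h1 h2
        try exact eq_of_heq h2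
    rw [hpre]; refine finsum_mem_singleton.trans ?_
    rfl

noncomputable def sigFibInv (k : ξ.J) :
    GrTwHom (Xf k) (fiberTw ξ (sigmaTw ξ Xf) (sigmaArr ξ Xf) k) where
  φ := fun j => ⟨⟨k, j⟩, rfl⟩
  ψ := sigFibInvψ ξ Xf k
  hφ := by
    rintro ⟨⟨k', j⟩, h⟩
    obtain rfl : k' = k := h
    exact ⟨j, rfl⟩
  hψ := fun c => ⟨⟨⟨k, c⟩, rfl⟩, rfl⟩
  hcomm := fun j => rfl
  hw := by
    intro b
    have hpre : (fun a : (Xf k).J =>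
        (⟨⟨k, a⟩, rfl⟩ : (fiberTw ξ (sigmaTw ξ Xf) (sigmaArr ξ Xf) k).J)) ⁻¹' {b}
        = {sigFibHomφ ξ Xf k b} := by
      ext a
      obtain ⟨⟨k', j⟩, h⟩ := b
      obtain rfl : k' = k := h
      constructor
      · intro ha
        have hv := congrArg Subtype.val ha
        injection hv with h1 h2
        try exact eq_of_heq h2
      · intro ha
        have haj : a = j := ha
        subst haj
        rfl
    refine (finsum_mem_congr hpre fun _ _ => rfl).trans (finsum_mem_singleton.trans ?_)
    obtain ⟨⟨k', j⟩, h⟩ := b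
    obtain rfl : k' = k := h
    rfl

/-- The comparison iso in the product category. -/
noncomputable def sigFibIso :
    (Ffun ξ).obj (StructuredArrow.mk (sigmaArr ξ Xf).op) ≅ Xf where
  hom := fun k => sigFibHom ξ Xf k
  inv := fun k => sigFibInv ξ Xf k
  hom_inv_id := by
    funext k
    apply GrTwHom.ext'
    · funext p
      obtain ⟨⟨k', j⟩, h⟩ := p
      obtain rfl : k' = k := h
      rfl
    · funext p
      obtain ⟨⟨k', c⟩, h⟩ := p
      obtain rfl : k' = k := h
      rfl
  inv_hom_id := by
    funext k
    apply GrTwHom.ext'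
    · funext j
      rfl
    · funext c
      rfl

theorem Ffun_essSurj : (Ffun ξ).EssSurj := by
  constructor
  intro Xf
  exact ⟨StructuredArrow.mk (sigmaArr ξ Xf).op, ⟨sigFibIso ξ Xf⟩⟩

end EssSurj
/-- The functor `h^u : cTw(fSets)_λ → (fSets_λ)^op`, `(λ̲, J →^φ K) ↦ (K, φ_*λ̲)`, is
cofinal; each comma category under `ξ = (K', μ̲)` is equivalent to the product
`∏_{k ∈ K'} cTw(fSets)^{μ̲(k)}`, and each `cTw(fSets)^μ` is connected. -/
theorem stmt17 (Λ : Type) [AddCommMonoid Λ] (lam : Λ) :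
    (hu Λ lam).Final ∧
    (∀ ξ : GrSet Λ lam,
        Nonempty (StructuredArrow (Opposite.op ξ) (hu Λ lam) ≌ ∀ k : ξ.J, GrTw Λ (ξ.w k))) ∧
    (∀ mu : Λ, IsConnected (GrTw Λ mu)) := by
  have hequiv : ∀ ξ : GrSet Λ lam,
      Nonempty (StructuredArrow (Opposite.op ξ) (hu Λ lam) ≌ ∀ k : ξ.J, GrTw Λ (ξ.w k)) := by
    intro ξ
    haveI := Ffun_full ξ
    haveI := Ffun_faithful ξ
    haveI := Ffun_essSurj ξ
    haveI : (Ffun ξ).IsEquivalence := { }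
    exact ⟨(Ffun ξ).asEquivalence⟩
  refine ⟨?_, hequiv, grTw_connected⟩
  constructor
  intro d
  obtain ⟨e⟩ := hequiv d.unop
  haveI := pi_grTw_connected (Λ := Λ) (d.unop.w)
  exact isConnected_of_equivalent e.symm
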